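/- Let Y ∈ ℝ^{n×d}, x* ∈ ℝ^n, β > 0, and let D_1, …, D_ℓ be the ReLU sign-pattern matrices of Y. Suppose (w_i*, z_i*)_{i=1}^ℓ is an optimal solution of the convex dual program attaining value d*, such that for each i at most one of w_i*, z_i* is nonzero. Define primal weights as follows: for each i with w_i* ≠ 0 take the neuron (u_i, v_i) = (w_i*/√‖w_i*‖_2, √‖w_i*‖_2), and for each i with z_i* ≠ 0 take the neuron (u_i, v_i) = (z_i*/√‖z_i*‖_2, −√‖z_i*‖_2). Then these primal weights are feasible for the primal training problem with m = ℓ neurons (padding unused neurons with zeros) and attain primal objective value equal to d*; in particular, if m ≥ m* + 1 (with m* as in the strong duality theorem) they are optimal for the primal problem. -/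
import Mathlib


open Matrix Finset

noncomputable section

/-- Euclidean (ℓ2) norm of a vector in ℝ^k. -/
def l2 {k : ℕ} (x : Fin k → ℝ) : ℝ := Real.sqrt (∑ i, (x i) ^ 2)

/-- Componentwise ReLU. -/
def relu {k : ℕ} (x : Fin k → ℝ) : Fin k → ℝ := fun i => max (x i) 0

/-- The set of ReLU sign-pattern matrices of `Y`: diagonal 0/1 matrices
`Diag(1_{Yu ≥ 0})` as `u` ranges over the closed unit ball. -/
def signPatterns {n d : ℕ} (Y : Matrix (Fin n) (Fin d) ℝ) :
    Set (Matrix (Fin n) (Fin n) ℝ) :=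
  { M | ∃ u : Fin d → ℝ, l2 u ≤ 1 ∧
      M = Matrix.diagonal (fun i => if 0 ≤ Y.mulVec u i then (1 : ℝ) else 0) }

/-- Primal (non-convex) training objective with `m` neurons. -/
def primalObj {n d : ℕ} (Y : Matrix (Fin n) (Fin d) ℝ) (xs : Fin n → ℝ) (β : ℝ)
    (m : ℕ) (u : Fin m → Fin d → ℝ) (v : Fin m → ℝ) : ℝ :=
  (1 / 2) * l2 ((∑ j, v j • relu (Y.mulVec (u j))) - xs) ^ 2
    + (β / 2) * ∑ j, (l2 (u j) ^ 2 + |v j| ^ 2)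

/-- Optimal value of the primal training problem with `m` neurons. -/
def pStar {n d : ℕ} (Y : Matrix (Fin n) (Fin d) ℝ) (xs : Fin n → ℝ) (β : ℝ)
    (m : ℕ) : ℝ :=
  sInf { c | ∃ u : Fin m → Fin d → ℝ, ∃ v : Fin m → ℝ, c = primalObj Y xs β m u v }

/-- Dual feasibility: `(2 Dᵢ − I) Y wᵢ ≥ 0` componentwise for every `i`. -/
def dualFeasible {n d ℓ : ℕ} (Y : Matrix (Fin n) (Fin d) ℝ)
    (D : Fin ℓ → Matrix (Fin n) (Fin n) ℝ) (w : Fin ℓ → Fin d → ℝ) : Prop :=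
  ∀ i j, 0 ≤ ((2 • D i - 1).mulVec (Y.mulVec (w i))) j

/-- Convex dual objective. -/
def dualObj {n d ℓ : ℕ} (Y : Matrix (Fin n) (Fin d) ℝ) (xs : Fin n → ℝ) (β : ℝ)
    (D : Fin ℓ → Matrix (Fin n) (Fin n) ℝ) (w z : Fin ℓ → Fin d → ℝ) : ℝ :=
  (1 / 2) * l2 ((∑ i, (D i).mulVec (Y.mulVec (w i - z i))) - xs) ^ 2
    + β * ∑ i, (l2 (w i) + l2 (z i))

/-- Optimal value of the convex dual program. -/
def dStar {n d ℓ : ℕ} (Y : Matrix (Fin n) (Fin d) ℝ) (xs : Fin n → ℝ) (β : ℝ)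
    (D : Fin ℓ → Matrix (Fin n) (Fin n) ℝ) : ℝ :=
  sInf { c | ∃ w z : Fin ℓ → Fin d → ℝ,
    dualFeasible Y D w ∧ dualFeasible Y D z ∧ c = dualObj Y xs β D w z }

end

open Classical in
/-- Reconstructed first-layer weights from an optimal dual solution. -/
noncomputable def recU {d ℓ : ℕ} (w z : Fin ℓ → Fin d → ℝ) : Fin ℓ → Fin d → ℝ :=
  fun i =>
    if w i ≠ 0 then (Real.sqrt (l2 (w i)))⁻¹ • w i
    else if z i ≠ 0 then (Real.sqrt (l2 (z i)))⁻¹ • z i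
    else 0

open Classical in
/-- Reconstructed second-layer weights from an optimal dual solution. -/
noncomputable def recV {d ℓ : ℕ} (w z : Fin ℓ → Fin d → ℝ) : Fin ℓ → ℝ :=
  fun i =>
    if w i ≠ 0 then Real.sqrt (l2 (w i))
    else if z i ≠ 0 then -Real.sqrt (l2 (z i))
    else 0

lemma l2_nonneg {k : ℕ} (x : Fin k → ℝ) : 0 ≤ l2 x := Real.sqrt_nonneg _
lemma l2_zero {k : ℕ} : l2 (0 : Fin k → ℝ) = 0 := by simp [l2]
lemma l2_sq {k : ℕ} (x : Fin k → ℝ) : l2 x ^ 2 = ∑ i, (x i)^2 :=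
  Real.sq_sqrt (Finset.sum_nonneg fun i _ => sq_nonneg _)
lemma l2_pos {k : ℕ} {x : Fin k → ℝ} (h : x ≠ 0) : 0 < l2 x := by
  obtain ⟨i, hi⟩ := Function.ne_iff.1 h
  exact Real.sqrt_pos.2 (Finset.sum_pos' (fun j _ => sq_nonneg _)
    ⟨i, Finset.mem_univ i, pow_pos (abs_pos.2 hi) 2 |>.trans_eq (sq_abs _)⟩)
lemma l2_smul {k : ℕ} (c : ℝ) (x : Fin k → ℝ) : l2 (c • x) = |c| * l2 x := by
  simp only [l2, Pi.smul_apply, smul_eq_mul, mul_pow, ← Finset.mul_sum]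
  rw [Real.sqrt_mul (sq_nonneg c), Real.sqrt_sq_eq_abs]
lemma relu_smul {k : ℕ} {c : ℝ} (hc : 0 ≤ c) (x : Fin k → ℝ) :
    relu (c • x) = c • relu x := by
  funext i
  simp only [relu, Pi.smul_apply, smul_eq_mul]
  rw [mul_max_of_nonneg _ _ hc, mul_zero]
lemma relu_eq_diag {n : ℕ} (e : Fin n → ℝ) (he : ∀ j, e j = 0 ∨ e j = 1)
    (x : Fin n → ℝ)
    (hf : ∀ j, 0 ≤ ((2 • Matrix.diagonal e - 1).mulVec x) j) :
    relu x = (Matrix.diagonal e).mulVec x := by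
  funext j
  have h := hf j
  rw [show (2 • Matrix.diagonal e - 1 : Matrix (Fin n) (Fin n) ℝ)
      = Matrix.diagonal (fun i => 2 * e i - 1) by
    have h2 : (2 : Matrix (Fin n) (Fin n) ℝ) = Matrix.diagonal (fun _ => 2) := by
      rw [← one_add_one_eq_two, ← Matrix.diagonal_one, Matrix.diagonal_add]
      norm_num
    ext i k
    rcases eq_or_ne i k with rfl | hik
    · simp [h2, Matrix.diagonal_apply, Matrix.one_apply]
    · simp [h2, Matrix.diagonal_apply, hik, Matrix.one_apply]] at h
  rw [Matrix.mulVec_diagonal] at h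
  rw [Matrix.mulVec_diagonal]
  rcases he j with h0 | h1
  · rw [h0] at h ⊢
    simp only [relu]
    have : x j ≤ 0 := by nlinarith
    simp [max_eq_right this]
  · rw [h1] at h ⊢
    simp only [relu]
    have : 0 ≤ x j := by nlinarith
    simp [max_eq_left this]

/-- **Primal weight reconstruction.** If `(wᵢ*, zᵢ*)` is an optimal
dual solution with at most one of `wᵢ*, zᵢ*` nonzero for each `i`, then the
reconstructed primal weights (with `m = ℓ` neurons, unused neurons set to zero)
attain primal objective value `d*`; in particular they are optimal for the primal
problem whenever `ℓ ≥ m* + 1` for an `m*` as in the strong duality theorem. -/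
theorem primal_reconstruction {n d ℓ : ℕ} (Y : Matrix (Fin n) (Fin d) ℝ)
    (xs : Fin n → ℝ) (β : ℝ) (hβ : 0 < β)
    (D : Fin ℓ → Matrix (Fin n) (Fin n) ℝ)
    (hinj : Function.Injective D) (hrange : Set.range D = signPatterns Y)
    (w z : Fin ℓ → Fin d → ℝ)
    (hw : dualFeasible Y D w) (hz : dualFeasible Y D z)
    (hopt : dualObj Y xs β D w z = dStar Y xs β D)
    (hone : ∀ i, w i = 0 ∨ z i = 0) :
    primalObj Y xs β ℓ (recU w z) (recV w z) = dStar Y xs β D ∧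
    ∀ mstar : ℕ, mstar ≤ n →
      (∀ m ≥ mstar + 1, pStar Y xs β m = dStar Y xs β D) →
      mstar + 1 ≤ ℓ →
      primalObj Y xs β ℓ (recU w z) (recV w z) = pStar Y xs β ℓ := by
  -- each D i is a diagonal 0/1 matrix
  have hD : ∀ i, ∃ e : Fin n → ℝ, (∀ j, e j = 0 ∨ e j = 1) ∧ D i = Matrix.diagonal e := by
    intro i
    have : D i ∈ signPatterns Y := hrange ▸ Set.mem_range_self i
    obtain ⟨u, _, hu⟩ := this
    exact ⟨_, fun j => by by_cases h : 0 ≤ Y.mulVec u j <;> simp [h], hu⟩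
  -- key per-neuron identities
  have key1 : ∀ i, (recV w z i) • relu (Y.mulVec (recU w z i))
      = (D i).mulVec (Y.mulVec (w i - z i)) := by
    intro i
    obtain ⟨e, he, hDe⟩ := hD i
    by_cases hwi : w i = 0
    · by_cases hzi : z i = 0
      · simp [recU, recV, hwi, hzi, relu, Matrix.mulVec_zero]
      · have hs : (0:ℝ) < Real.sqrt (l2 (z i)) := Real.sqrt_pos.2 (l2_pos hzi)
        have hru : recU w z i = (Real.sqrt (l2 (z i)))⁻¹ • z i := by
          simp [recU, hwi, hzi]
        have hrv : recV w z i = -Real.sqrt (l2 (z i)) := by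
          simp [recV, hwi, hzi]
        rw [hru, hrv, Matrix.mulVec_smul, relu_smul (by positivity),
          relu_eq_diag e he _ (by rw [← hDe]; exact hz i)]
        rw [smul_smul, neg_mul, mul_inv_cancel₀ hs.ne', hwi, zero_sub,
          Matrix.mulVec_neg, Matrix.mulVec_neg, hDe]
        simp
    · have hzi : z i = 0 := (hone i).resolve_left hwi
      have hs : (0:ℝ) < Real.sqrt (l2 (w i)) := Real.sqrt_pos.2 (l2_pos hwi)
      have hru : recU w z i = (Real.sqrt (l2 (w i)))⁻¹ • w i := by
        simp [recU, hwi]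
      have hrv : recV w z i = Real.sqrt (l2 (w i)) := by
        simp [recV, hwi]
      rw [hru, hrv, Matrix.mulVec_smul, relu_smul (by positivity),
        relu_eq_diag e he _ (by rw [← hDe]; exact hw i)]
      rw [smul_smul, mul_inv_cancel₀ hs.ne', hzi, sub_zero, hDe]
      simp
  have key2 : ∀ i, l2 (recU w z i) ^ 2 + |recV w z i| ^ 2
      = 2 * (l2 (w i) + l2 (z i)) := by
    intro i
    by_cases hwi : w i = 0
    · by_cases hzi : z i = 0
      · simp [recU, recV, hwi, hzi, l2_zero]
      · have hl : (0:ℝ) < l2 (z i) := l2_pos hzi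
        have hs : (0:ℝ) < Real.sqrt (l2 (z i)) := Real.sqrt_pos.2 hl
        have hsq : Real.sqrt (l2 (z i)) ^ 2 = l2 (z i) := Real.sq_sqrt hl.le
        have hru : recU w z i = (Real.sqrt (l2 (z i)))⁻¹ • z i := by
          simp [recU, hwi, hzi]
        have hrv : recV w z i = -Real.sqrt (l2 (z i)) := by
          simp [recV, hwi, hzi]
        rw [hru, hrv, l2_smul, abs_neg, abs_of_pos hs,
          abs_of_pos (by positivity)]
        rw [hwi, l2_zero]
        field_simp
        nlinarith
    · have hzi : z i = 0 := (hone i).resolve_left hwi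
      have hl : (0:ℝ) < l2 (w i) := l2_pos hwi
      have hs : (0:ℝ) < Real.sqrt (l2 (w i)) := Real.sqrt_pos.2 hl
      have hsq : Real.sqrt (l2 (w i)) ^ 2 = l2 (w i) := Real.sq_sqrt hl.le
      have hru : recU w z i = (Real.sqrt (l2 (w i)))⁻¹ • w i := by
        simp [recU, hwi]
      have hrv : recV w z i = Real.sqrt (l2 (w i)) := by
        simp [recV, hwi]
      rw [hru, hrv, l2_smul, abs_of_pos hs, abs_of_pos (by positivity)]
      rw [hzi, l2_zero]
      field_simp
      nlinarith
  have hmain : primalObj Y xs β ℓ (recU w z) (recV w z) = dualObj Y xs β D w z := by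
    unfold primalObj dualObj
    rw [Finset.sum_congr rfl (fun i _ => key1 i),
      Finset.sum_congr rfl (fun i _ => key2 i), ← Finset.mul_sum]
    ring
  refine ⟨hmain.trans hopt, fun mstar _ hp hl => ?_⟩
  exact (hmain.trans hopt).trans (hp ℓ hl).symm
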